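/- Let K ⊂ S² = {p ∈ ℝ³ : |p| = 1} be a set satisfying: (i) ⟨p, q⟩ > cos(π/100) for all p, q ∈ K; and (ii) K is strictly geodesically convex, i.e. for all distinct p, q ∈ K, writing α := arccos⟨p, q⟩ ∈ (0, π), the point (sin((1−t)α) p + sin(tα) q)/sin(α) does not belong to K for any t ∈ (0,1). Let C := {r p : r ∈ [0,1], p ∈ K} be the cone over K with apex at the origin, and let L ⊂ ℝ³ be a line with 0 ∉ L. Then L ∩ C contains at most 2 points. -/

import Mathlib

open Set
set_option maxHeartbeats 1000000

lemma slerp_aux (p q : EuclideanSpace ℝ (Fin 3)) (hp : ‖p‖ = 1) (hq : ‖q‖ = 1)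
    (hc0 : 0 < (inner ℝ p q : ℝ)) (hc1 : (inner ℝ p q : ℝ) < 1)
    (a b : ℝ) (ha : 0 < a) (hb : 0 < b) (hu : ‖a • p + b • q‖ = 1) :
    ∃ t ∈ Ioo (0:ℝ) 1,
      (Real.sin (Real.arccos (inner ℝ p q : ℝ)))⁻¹ •
          (Real.sin ((1 - t) * Real.arccos (inner ℝ p q : ℝ)) • p +
            Real.sin (t * Real.arccos (inner ℝ p q : ℝ)) • q) = a • p + b • q := by
  set c : ℝ := inner ℝ p q with hcdef
  set α := Real.arccos c with hadef
  have hcm1 : (-1:ℝ) ≤ c := by linarith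
  have hcos : Real.cos α = c := Real.cos_arccos hcm1 hc1.le
  have hα0 : 0 < α := Real.arccos_pos.2 hc1
  have hαπ2 : α < Real.pi / 2 := Real.arccos_lt_pi_div_two.2 hc0
  have hαπ : α < Real.pi := by linarith [Real.pi_pos]
  have hs : 0 < Real.sin α := Real.sin_pos_of_pos_of_lt_pi hα0 hαπ
  have hs1 : Real.sin α ≤ 1 := Real.sin_le_one α
  have hnorm : a^2 + 2*a*b*c + b^2 = 1 := by
    have h1 : (inner ℝ (a•p + b•q) (a•p + b•q) : ℝ) = ‖a•p + b•q‖^2 := real_inner_self_eq_norm_sq _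
    rw [hu] at h1
    have h2 : (inner ℝ (a•p + b•q) (a•p + b•q) : ℝ)
        = a^2 * ‖p‖^2 + 2*(a*b*c) + b^2 * ‖q‖^2 := by
      rw [real_inner_add_add_self]
      simp only [real_inner_smul_left, real_inner_smul_right]
      simp only [real_inner_self_eq_norm_sq]
      rw [← hcdef]; ring
    rw [hp, hq] at h2
    nlinarith [h1, h2]
  have hb1 : b ≤ 1 := by nlinarith [mul_pos (mul_pos ha hb) hc0, sq_nonneg a]
  have hble : b * Real.sin α ≤ 1 := by nlinarith
  have hbge : (-1:ℝ) ≤ b * Real.sin α := by nlinarith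
  set θ := Real.arcsin (b * Real.sin α) with hθdef
  have hsinθ : Real.sin θ = b * Real.sin α := Real.sin_arcsin hbge hble
  have hcosθ : Real.cos θ = a + b * c := by
    rw [hθdef, Real.cos_arcsin]
    have hsq : Real.sin α ^ 2 = 1 - c^2 := by
      have h := Real.sin_sq_add_cos_sq α
      rw [hcos] at h; linarith
    have h2 : 1 - (b * Real.sin α)^2 = (a + b*c)^2 := by nlinarith
    rw [h2, Real.sqrt_sq (by nlinarith)]
  have hθ0 : 0 < θ := Real.arcsin_pos.2 (by positivity)
  have hsin_sub : Real.sin (α - θ) = a * Real.sin α := by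
    rw [Real.sin_sub, hsinθ, hcosθ, hcos]; ring
  have hθα : θ < α := by
    by_contra hle
    push_neg at hle
    have hpi2 : θ ≤ Real.pi / 2 := Real.arcsin_le_pi_div_two _
    have h1 : 0 ≤ Real.sin (θ - α) :=
      Real.sin_nonneg_of_nonneg_of_le_pi (by linarith) (by linarith [Real.pi_pos])
    have h2 : Real.sin (α - θ) ≤ 0 := by
      rw [show α - θ = -(θ - α) by ring, Real.sin_neg]; linarith
    nlinarith
  refine ⟨θ/α, ⟨div_pos hθ0 hα0, (div_lt_one hα0).2 hθα⟩, ?_⟩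
  have h1t : (1 - θ/α) * α = α - θ := by field_simp
  have h2t : (θ/α) * α = θ := by field_simp
  rw [h1t, h2t, hsin_sub, hsinθ, smul_add, smul_smul, smul_smul]
  rw [show (Real.sin α)⁻¹ * (a * Real.sin α) = a by field_simp]
  rw [show (Real.sin α)⁻¹ * (b * Real.sin α) = b by field_simp]

/-- Let `K ⊆ S²` satisfy `⟨p,q⟩ > cos(π/100)` for all `p, q ∈ K` and be
strictly geodesically convex (the interior of the minimising great-circle arc between any
two distinct points of `K` avoids `K`). Let `C = {r p : r ∈ [0,1], p ∈ K}` be the cone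
over `K` with apex the origin, and let `L` be a line with `0 ∉ L`. Then `L ∩ C` contains
at most two points. -/
theorem stmt14 (K : Set (EuclideanSpace ℝ (Fin 3)))
    (hKs : ∀ p ∈ K, ‖p‖ = 1)
    (hKclose : ∀ p ∈ K, ∀ q ∈ K, Real.cos (Real.pi / 100) < (inner ℝ p q : ℝ))
    (hKconv : ∀ p ∈ K, ∀ q ∈ K, p ≠ q →
      ∀ t ∈ Ioo (0:ℝ) 1,
        (Real.sin (Real.arccos (inner ℝ p q : ℝ)))⁻¹ •
            (Real.sin ((1 - t) * Real.arccos (inner ℝ p q : ℝ)) • p +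
              Real.sin (t * Real.arccos (inner ℝ p q : ℝ)) • q) ∉ K)
    (L : Set (EuclideanSpace ℝ (Fin 3)))
    (hL : ∃ x v : EuclideanSpace ℝ (Fin 3), v ≠ 0 ∧ L = {y | ∃ t : ℝ, y = x + t • v})
    (h0 : (0 : EuclideanSpace ℝ (Fin 3)) ∉ L) :
    ∃ a b : EuclideanSpace ℝ (Fin 3),
      L ∩ {w | ∃ r ∈ Icc (0:ℝ) 1, ∃ p ∈ K, w = r • p} ⊆ {a, b} := by
  classical
  obtain ⟨x₀, v, hv, hLdef⟩ := hL
  set S : Set (EuclideanSpace ℝ (Fin 3)) :=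
    L ∩ {w | ∃ r ∈ Icc (0:ℝ) 1, ∃ p ∈ K, w = r • p} with hSdef
  have hcospos : 0 < Real.cos (Real.pi / 100) :=
    Real.cos_pos_of_mem_Ioo ⟨by linarith [Real.pi_pos], by linarith [Real.pi_pos]⟩
  have hmemL : ∀ s : ℝ, x₀ + s • v ∈ L := by
    intro s; rw [hLdef]; exact ⟨s, rfl⟩
  have hdecomp : ∀ u ∈ S, ∃ r : ℝ, ∃ p ∈ K, 0 < r ∧ u = r • p := by
    rintro u ⟨huL, r, ⟨hr0, hr1⟩, p, hpK, hup⟩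
    have hune : u ≠ 0 := by intro h; rw [h] at huL; exact h0 huL
    refine ⟨r, p, hpK, ?_, hup⟩
    rcases hr0.lt_or_eq with h | h
    · exact h
    · exfalso; apply hune; rw [hup, ← h, zero_smul]
  have key : ∀ s1 s2 s3 : ℝ, s1 < s2 → s2 < s3 →
      x₀ + s1 • v ∈ S → x₀ + s2 • v ∈ S → x₀ + s3 • v ∈ S → False := by
    intro s1 s2 s3 h12 h23 hm1 hm2 hm3
    obtain ⟨r1, p1, hp1K, hr1, e1⟩ := hdecomp _ hm1
    obtain ⟨r2, p2, hp2K, hr2, e2⟩ := hdecomp _ hm2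
    obtain ⟨r3, p3, hp3K, hr3, e3⟩ := hdecomp _ hm3
    have h13 : s1 < s3 := h12.trans h23
    have hs31 : s3 - s1 ≠ 0 := by linarith
    -- p1 ≠ p3
    have hp13 : p1 ≠ p3 := by
      intro heq
      rw [← heq] at e3
      have hd : (s3 - s1) • v = (r3 - r1) • p1 := by
        have h' : (x₀ + s3 • v) - (x₀ + s1 • v) = r3 • p1 - r1 • p1 := by rw [← e1, ← e3]
        rw [sub_smul, sub_smul]
        calc s3 • v - s1 • v = (x₀ + s3 • v) - (x₀ + s1 • v) := by abel
          _ = r3 • p1 - r1 • p1 := h'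
      have hvc : v = ((s3 - s1)⁻¹ * (r3 - r1)) • p1 := by
        rw [← smul_smul, ← hd, smul_smul, inv_mul_cancel₀ hs31, one_smul]
      set cc : ℝ := (s3 - s1)⁻¹ * (r3 - r1) with hccdef
      have hccne : cc ≠ 0 := by
        intro h; apply hv; rw [hvc, h, zero_smul]
      apply h0
      rw [hLdef]
      refine ⟨s1 - r1 / cc, ?_⟩
      have : x₀ + (s1 - r1 / cc) • v = 0 := by
        calc x₀ + (s1 - r1 / cc) • v = (x₀ + s1 • v) - (r1 / cc) • v := by
              rw [sub_smul]; abel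
          _ = r1 • p1 - ((r1 / cc) * cc) • p1 := by rw [e1, hvc, smul_smul]
          _ = r1 • p1 - r1 • p1 := by rw [div_mul_cancel₀ _ hccne]
          _ = 0 := by abel
      exact this.symm
    -- the middle point is a positive combination
    set lam : ℝ := (s3 - s2) / (s3 - s1) with hlamdef
    have hlam0 : 0 < lam := div_pos (by linarith) (by linarith)
    have hlam1 : lam < 1 := (div_lt_one (by linarith)).2 (by linarith)
    have hslam : lam * s1 + (1 - lam) * s3 = s2 := by
      rw [hlamdef]
      field_simp
      ring
    have hmid : lam • (x₀ + s1 • v) + (1 - lam) • (x₀ + s3 • v) = x₀ + s2 • v := by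
      rw [← hslam]; module
    have h2 : r2 • p2 = (lam * r1) • p1 + ((1 - lam) * r3) • p3 := by
      rw [← e2, ← hmid, e1, e3, smul_smul, smul_smul]
    set a : ℝ := r2⁻¹ * (lam * r1) with hadef
    set b : ℝ := r2⁻¹ * ((1 - lam) * r3) with hbdef
    have ha : 0 < a := by
      apply mul_pos (inv_pos.2 hr2) (mul_pos hlam0 hr1)
    have hb : 0 < b := by
      apply mul_pos (inv_pos.2 hr2) (mul_pos (by linarith) hr3)
    have hp2eq : p2 = a • p1 + b • p3 := by
      have h' : r2⁻¹ • (r2 • p2) = r2⁻¹ • ((lam * r1) • p1 + ((1 - lam) * r3) • p3) := by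
        rw [h2]
      rwa [smul_smul, inv_mul_cancel₀ hr2.ne', one_smul, smul_add, smul_smul, smul_smul]
        at h'
    have hn1 : ‖p1‖ = 1 := hKs p1 hp1K
    have hn3 : ‖p3‖ = 1 := hKs p3 hp3K
    have hc0 : 0 < (inner ℝ p1 p3 : ℝ) := hcospos.trans (hKclose p1 hp1K p3 hp3K)
    have hc1 : (inner ℝ p1 p3 : ℝ) < 1 := by
      refine lt_of_le_of_ne ?_ ?_
      · calc (inner ℝ p1 p3 : ℝ) ≤ ‖p1‖ * ‖p3‖ := real_inner_le_norm p1 p3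
          _ = 1 := by rw [hn1, hn3]; ring
      · intro h
        exact hp13 ((inner_eq_one_iff_of_norm_eq_one hn1 hn3).1 h)
    have hunit : ‖a • p1 + b • p3‖ = 1 := by rw [← hp2eq]; exact hKs p2 hp2K
    obtain ⟨t, ht, heq⟩ := slerp_aux p1 p3 hn1 hn3 hc0 hc1 a b ha hb hunit
    exact hKconv p1 hp1K p3 hp3K hp13 t ht (by rw [heq, ← hp2eq]; exact hp2K)
  -- now suppose S has three distinct points
  by_contra hcon
  push_neg at hcon
  have h3 : ∀ a b : EuclideanSpace ℝ (Fin 3), ∃ c ∈ S, c ∉ ({a, b} : Set _) := by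
    intro a b
    have := hcon a b
    rwa [Set.not_subset] at this
  obtain ⟨u1, hu1, -⟩ := h3 0 0
  obtain ⟨u2, hu2, hne2⟩ := h3 u1 u1
  obtain ⟨u3, hu3, hne3⟩ := h3 u1 u2
  have h21 : u2 ≠ u1 := by simpa using hne2
  have h31 : u3 ≠ u1 := by
    intro h; exact hne3 (by rw [h]; exact mem_insert _ _)
  have h32 : u3 ≠ u2 := by
    intro h; exact hne3 (by rw [h]; exact mem_insert_of_mem _ rfl)
  obtain ⟨t1, ht1⟩ : ∃ t : ℝ, u1 = x₀ + t • v := by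
    have := hu1.1; rwa [hLdef] at this
  obtain ⟨t2, ht2⟩ : ∃ t : ℝ, u2 = x₀ + t • v := by
    have := hu2.1; rwa [hLdef] at this
  obtain ⟨t3, ht3⟩ : ∃ t : ℝ, u3 = x₀ + t • v := by
    have := hu3.1; rwa [hLdef] at this
  have hm1 : x₀ + t1 • v ∈ S := ht1 ▸ hu1
  have hm2 : x₀ + t2 • v ∈ S := ht2 ▸ hu2
  have hm3 : x₀ + t3 • v ∈ S := ht3 ▸ hu3
  have hd21 : t2 ≠ t1 := by
    intro h; apply h21; rw [ht1, ht2, h]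
  have hd31 : t3 ≠ t1 := by
    intro h; apply h31; rw [ht1, ht3, h]
  have hd32 : t3 ≠ t2 := by
    intro h; apply h32; rw [ht2, ht3, h]
  rcases lt_trichotomy t1 t2 with h12 | h12 | h12
  · rcases lt_trichotomy t2 t3 with h23 | h23 | h23
    · exact key _ _ _ h12 h23 hm1 hm2 hm3
    · exact hd32 h23.symm
    · rcases lt_trichotomy t1 t3 with h13 | h13 | h13
      · exact key _ _ _ h13 h23 hm1 hm3 hm2
      · exact hd31 h13.symm
      · exact key _ _ _ h13 h12 hm3 hm1 hm2
  · exact hd21 h12.symm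
  · rcases lt_trichotomy t1 t3 with h13 | h13 | h13
    · exact key _ _ _ h12 h13 hm2 hm1 hm3
    · exact hd31 h13.symm
    · rcases lt_trichotomy t2 t3 with h23 | h23 | h23
      · exact key _ _ _ h23 h13 hm2 hm3 hm1
      · exact hd32 h23.symm
      · exact key _ _ _ h23 h12 hm3 hm2 hm1
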